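/- Let A be an n×n complex matrix whose characteristic polynomial factors as ∏_{i=1}^{n} (X − λ_i) with λ_1, …, λ_n ∈ ℂ. Then the determinant of the linear endomorphism Λ_A of the space of symmetric n×n complex matrices equals ∏_{1 ≤ i ≤ j ≤ n} (λ_i + λ_j)/2. -/

import Mathlib

open Matrix Polynomial

/-- The submodule of symmetric `n × n` matrices. -/
def symMat (n : ℕ) (𝕜 : Type*) [CommRing 𝕜] : Submodule 𝕜 (Matrix (Fin n) (Fin n) 𝕜) where
  carrier := {W | Wᵀ = W}
  add_mem' := by
    intro a b ha hb
    simp only [Set.mem_setOf_eq, Matrix.transpose_add] at *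
    rw [ha, hb]
  zero_mem' := by simp
  smul_mem' := by
    intro c a ha
    simp only [Set.mem_setOf_eq, Matrix.transpose_smul] at *
    rw [ha]

/-- The operator `Λ_A` on symmetric matrices, `Λ_A W = (Aᵀ W + W A)/2`. -/
def Lam {n : ℕ} {𝕜 : Type*} [Field 𝕜] (A : Matrix (Fin n) (Fin n) 𝕜) :
    symMat n 𝕜 →ₗ[𝕜] symMat n 𝕜 :=
  LinearMap.restrict
    ((2 : 𝕜)⁻¹ • (LinearMap.mulLeft 𝕜 Aᵀ + LinearMap.mulRight 𝕜 A))
    (fun W hW => by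
      have h : Wᵀ = W := hW
      show ((2 : 𝕜)⁻¹ • (Aᵀ * W + W * A))ᵀ = (2 : 𝕜)⁻¹ • (Aᵀ * W + W * A)
      simp [Matrix.transpose_add, Matrix.transpose_mul, h, add_comm])

namespace DetLam

variable {n : ℕ}

abbrev Idx (n : ℕ) := {p : Fin n × Fin n // p.1 ≤ p.2}

lemma lam_coe {𝕜 : Type*} [Field 𝕜] (A : Matrix (Fin n) (Fin n) 𝕜) (W : symMat n 𝕜) :
    (Lam A W : Matrix (Fin n) (Fin n) 𝕜) = (2 : 𝕜)⁻¹ • ((Aᵀ * W) + (W * A)) := rfl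

lemma symMat_symm (W : symMat n ℂ) (i j : Fin n) :
    (W : Matrix (Fin n) (Fin n) ℂ) j i = (W : Matrix (Fin n) (Fin n) ℂ) i j := by
  have h : (W : Matrix (Fin n) (Fin n) ℂ)ᵀ = (W : Matrix (Fin n) (Fin n) ℂ) := W.2
  conv_rhs => rw [← h]
  rfl

/-- Coordinates of a symmetric matrix. -/
noncomputable def symEquiv (n : ℕ) : symMat n ℂ ≃ₗ[ℂ] (Idx n → ℂ) where
  toFun W x := (W : Matrix (Fin n) (Fin n) ℂ) x.1.1 x.1.2
  map_add' W V := rfl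
  map_smul' c W := rfl
  invFun c := ⟨Matrix.of fun i j =>
      if h : i ≤ j then c ⟨(i, j), h⟩ else c ⟨(j, i), le_of_not_ge h⟩, by
    show _ = _
    ext i j
    rw [Matrix.transpose_apply]
    show (if h : j ≤ i then c ⟨(j, i), h⟩ else c ⟨(i, j), le_of_not_ge h⟩)
      = (if h : i ≤ j then c ⟨(i, j), h⟩ else c ⟨(j, i), le_of_not_ge h⟩)
    by_cases h1 : i ≤ j <;> by_cases h2 : j ≤ i <;> simp [h1, h2]
    · have : i = j := le_antisymm h1 h2
      subst this; rfl
    · exact absurd (le_of_not_ge h1) (by simpa using h2)⟩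
  left_inv W := by
    apply Subtype.ext
    ext i j
    show (if h : i ≤ j then _ else _) = (W : Matrix (Fin n) (Fin n) ℂ) i j
    by_cases h1 : i ≤ j
    · simp [h1]
    · simp [h1, symMat_symm W]
  right_inv c := by
    funext x
    obtain ⟨⟨i, j⟩, hij⟩ := x
    show (if h : i ≤ j then _ else _) = _
    simp [hij]

noncomputable def symBasis (n : ℕ) : Module.Basis (Idx n) ℂ (symMat n ℂ) := Module.Basis.ofEquivFun (symEquiv n)

lemma symBasis_entry (x : Idx n) (p q : Fin n) :
    ((symBasis n x : symMat n ℂ) : Matrix (Fin n) (Fin n) ℂ) p q =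
      if (p = x.1.1 ∧ q = x.1.2) ∨ (p = x.1.2 ∧ q = x.1.1) then 1 else 0 := by
  obtain ⟨⟨i, j⟩, hij⟩ := x
  simp only [symBasis, Module.Basis.coe_ofEquivFun]
  show (if h : p ≤ q then Function.update (0 : Idx n → ℂ) _ 1 ⟨(p, q), h⟩
      else Function.update (0 : Idx n → ℂ) _ 1 ⟨(q, p), le_of_not_ge h⟩) = _
  by_cases h : p ≤ q
  · rw [dif_pos h, Function.update_apply]
    simp only [Pi.zero_apply]
    congr 1
    simp only [Subtype.mk.injEq, Prod.mk.injEq, eq_iff_iff]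
    constructor
    · rintro ⟨rfl, rfl⟩; exact Or.inl ⟨rfl, rfl⟩
    · rintro (⟨rfl, rfl⟩ | ⟨rfl, rfl⟩)
      · exact ⟨rfl, rfl⟩
      · exact ⟨le_antisymm h hij, le_antisymm hij h⟩
  · rw [dif_neg h, Function.update_apply]
    simp only [Pi.zero_apply]
    congr 1
    simp only [Subtype.mk.injEq, Prod.mk.injEq, eq_iff_iff]
    constructor
    · rintro ⟨rfl, rfl⟩; exact Or.inr ⟨rfl, rfl⟩
    · rintro (⟨rfl, rfl⟩ | ⟨rfl, rfl⟩)
      · exact absurd hij h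
      · exact ⟨rfl, rfl⟩

lemma toMatrix_lam_apply (T : Matrix (Fin n) (Fin n) ℂ) (x y : Idx n) :
    LinearMap.toMatrix (symBasis n) (symBasis n) (Lam T) x y =
      (2 : ℂ)⁻¹ * ((∑ k, T k x.1.1 *
          ((symBasis n y : symMat n ℂ) : Matrix (Fin n) (Fin n) ℂ) k x.1.2)
        + ∑ k, ((symBasis n y : symMat n ℂ) : Matrix (Fin n) (Fin n) ℂ) x.1.1 k * T k x.1.2) := by
  rw [LinearMap.toMatrix_apply]
  simp only [symBasis, Module.Basis.ofEquivFun_repr_apply]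
  show ((Lam T (symBasis n y) : Matrix (Fin n) (Fin n) ℂ)) x.1.1 x.1.2 = _
  rw [lam_coe]
  simp only [Matrix.smul_apply, Matrix.add_apply, Matrix.mul_apply, smul_eq_mul,
    Matrix.transpose_apply, symBasis]

lemma toMatrix_lam_zero (T : Matrix (Fin n) (Fin n) ℂ) (hT : T.BlockTriangular id)
    (x y : Idx n) (h : ¬(y.1.1 ≤ x.1.1 ∧ y.1.2 ≤ x.1.2)) :
    LinearMap.toMatrix (symBasis n) (symBasis n) (Lam T) x y = 0 := by
  obtain ⟨⟨p, q⟩, hpq⟩ := x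
  obtain ⟨⟨i, j⟩, hij⟩ := y
  simp only at h hpq hij
  have hpq' : (p : ℕ) ≤ (q : ℕ) := hpq
  have hij' : (i : ℕ) ≤ (j : ℕ) := hij
  have H : ¬((i : ℕ) ≤ (p : ℕ) ∧ (j : ℕ) ≤ (q : ℕ)) :=
    fun ⟨u, v⟩ => h ⟨Fin.le_def.mpr u, Fin.le_def.mpr v⟩
  rw [toMatrix_lam_apply]
  simp only
  have h1 : ∀ k : Fin n, T k p * ((symBasis n ⟨(i,j),hij⟩ : symMat n ℂ) :
      Matrix (Fin n) (Fin n) ℂ) k q = 0 := by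
    intro k
    rw [symBasis_entry]
    simp only
    rcases Decidable.em ((k = i ∧ q = j) ∨ (k = j ∧ q = i)) with hc | hc
    · rw [if_pos hc, mul_one]
      apply hT
      show (p : ℕ) < (k : ℕ)
      rcases hc with ⟨hk, hq⟩ | ⟨hk, hq⟩ <;>
        [(have vk := congrArg Fin.val hk; have vq := congrArg Fin.val hq; omega);
         (have vk := congrArg Fin.val hk; have vq := congrArg Fin.val hq; omega)]
    · rw [if_neg hc, mul_zero]
  have h2 : ∀ k : Fin n, ((symBasis n ⟨(i,j),hij⟩ : symMat n ℂ) :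
      Matrix (Fin n) (Fin n) ℂ) p k * T k q = 0 := by
    intro k
    rw [symBasis_entry]
    simp only
    rcases Decidable.em ((p = i ∧ k = j) ∨ (p = j ∧ k = i)) with hc | hc
    · rw [if_pos hc, one_mul]
      apply hT
      show (q : ℕ) < (k : ℕ)
      rcases hc with ⟨hp, hk⟩ | ⟨hp, hk⟩ <;>
        [(have vp := congrArg Fin.val hp; have vk := congrArg Fin.val hk; omega);
         (have vp := congrArg Fin.val hp; have vk := congrArg Fin.val hk; omega)]
    · rw [if_neg hc, zero_mul]
  rw [Finset.sum_congr rfl (fun k _ => h1 k), Finset.sum_congr rfl (fun k _ => h2 k)]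
  simp

lemma toMatrix_lam_diag (T : Matrix (Fin n) (Fin n) ℂ) (x : Idx n) :
    LinearMap.toMatrix (symBasis n) (symBasis n) (Lam T) x x =
      (T x.1.1 x.1.1 + T x.1.2 x.1.2) / 2 := by
  obtain ⟨⟨i, j⟩, hij⟩ := x
  rw [toMatrix_lam_apply]
  simp only [symBasis_entry]
  by_cases hd : i = j
  · subst hd
    simp only [and_self, or_self, mul_ite, mul_one, mul_zero, ite_mul, one_mul, zero_mul,
      Finset.sum_ite_eq', Finset.sum_ite_eq, Finset.mem_univ, if_true, and_true, true_and]
    ring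
  · have hd' : j ≠ i := Ne.symm hd
    have e1 : (∑ k, T k i * if (k = i ∧ j = j) ∨ (k = j ∧ j = i) then (1:ℂ) else 0) = T i i := by
      have : ∀ k : Fin n, (T k i * if (k = i ∧ j = j) ∨ (k = j ∧ j = i) then (1:ℂ) else 0)
          = if k = i then T k i else 0 := by
        intro k
        by_cases hk : k = i
        · subst hk; simp
        · simp [hk, hd']
      rw [Finset.sum_congr rfl (fun k _ => this k)]
      simp [Finset.sum_ite_eq']
    have e2 : (∑ k, (if (i = i ∧ k = j) ∨ (i = j ∧ k = i) then (1:ℂ) else 0) * T k j) = T j j := by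
      have : ∀ k : Fin n, ((if (i = i ∧ k = j) ∨ (i = j ∧ k = i) then (1:ℂ) else 0) * T k j)
          = if k = j then T k j else 0 := by
        intro k
        by_cases hk : k = j
        · subst hk; simp
        · simp [hk, hd]
      rw [Finset.sum_congr rfl (fun k _ => this k)]
      simp [Finset.sum_ite_eq']
    simp only at e1 e2 ⊢
    rw [e1, e2]
    ring

lemma idx_key_injective (n : ℕ) :
    Function.Injective (fun x : Idx n => (x.1.1 : ℕ) * n + (x.1.2 : ℕ)) := by
  intro a b hab
  simp only at hab
  have ha2 := a.1.2.isLt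
  have hb2 := b.1.2.isLt
  have h1 : (a.1.1 : ℕ) = (b.1.1 : ℕ) := by
    rcases lt_trichotomy ((a.1.1 : ℕ)) ((b.1.1 : ℕ)) with h' | h' | h'
    · exfalso
      have h2 : (a.1.1 : ℕ) * n + n ≤ (b.1.1 : ℕ) * n := by
        have := Nat.mul_le_mul_right n (Nat.succ_le_of_lt h')
        rwa [Nat.succ_mul] at this
      linarith
    · exact h'
    · exfalso
      have h2 : (b.1.1 : ℕ) * n + n ≤ (a.1.1 : ℕ) * n := by
        have := Nat.mul_le_mul_right n (Nat.succ_le_of_lt h')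
        rwa [Nat.succ_mul] at this
      linarith
  have h1' : (a.1.1 : ℕ) * n = (b.1.1 : ℕ) * n := by rw [h1]
  have h2 : (a.1.2 : ℕ) = (b.1.2 : ℕ) := by omega
  apply Subtype.ext
  apply Prod.ext
  · exact Fin.ext h1
  · exact Fin.ext h2

theorem det_lam_triangular (T : Matrix (Fin n) (Fin n) ℂ) (hT : T.BlockTriangular id) :
    LinearMap.det (Lam T) = ∏ x : Idx n, (T x.1.1 x.1.1 + T x.1.2 x.1.2) / 2 := by
  classical
  letI : LinearOrder (Idx n) := LinearOrder.lift'
    (fun x : Idx n => (x.1.1 : ℕ) * n + (x.1.2 : ℕ)) (idx_key_injective n)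
  rw [← LinearMap.det_toMatrix (symBasis n) (Lam T)]
  rw [Matrix.det_of_lowerTriangular _ (by
    intro x y hxy
    apply toMatrix_lam_zero T hT
    intro ⟨hle1, hle2⟩
    have hlt : (x.1.1 : ℕ) * n + (x.1.2 : ℕ) < (y.1.1 : ℕ) * n + (y.1.2 : ℕ) := hxy
    have hm := Nat.mul_le_mul_right n (show (y.1.1 : ℕ) ≤ (x.1.1 : ℕ) from hle1)
    have h2 : ((y.1.2 : ℕ)) ≤ ((x.1.2 : ℕ)) := hle2
    omega)]
  exact Finset.prod_congr rfl (fun x _ => toMatrix_lam_diag T x)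

/-- Congruence `W ↦ Pᵀ W P` as a linear map on symmetric matrices. -/
noncomputable def congLin (P : Matrix (Fin n) (Fin n) ℂ) : symMat n ℂ →ₗ[ℂ] symMat n ℂ where
  toFun W := ⟨Pᵀ * (W : Matrix (Fin n) (Fin n) ℂ) * P, by
    show _ = _
    have hW : (W : Matrix (Fin n) (Fin n) ℂ)ᵀ = (W : Matrix (Fin n) (Fin n) ℂ) := W.2
    calc (Pᵀ * (W : Matrix (Fin n) (Fin n) ℂ) * P)ᵀ
        = Pᵀ * ((W : Matrix (Fin n) (Fin n) ℂ))ᵀ * (Pᵀ)ᵀ := by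
          rw [Matrix.transpose_mul, Matrix.transpose_mul, ← Matrix.mul_assoc]
      _ = Pᵀ * (W : Matrix (Fin n) (Fin n) ℂ) * P := by rw [hW, Matrix.transpose_transpose]⟩
  map_add' W V := by
    apply Subtype.ext
    show Pᵀ * ((W : Matrix (Fin n) (Fin n) ℂ) + V) * P = _
    simp [Matrix.mul_add, Matrix.add_mul]
  map_smul' c W := by
    apply Subtype.ext
    show Pᵀ * (c • (W : Matrix (Fin n) (Fin n) ℂ)) * P = _
    simp [Matrix.mul_smul, Matrix.smul_mul]

lemma congLin_coe (P : Matrix (Fin n) (Fin n) ℂ) (W : symMat n ℂ) :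
    (congLin P W : Matrix (Fin n) (Fin n) ℂ) = Pᵀ * W * P := rfl

/-- Congruence as a linear equivalence when `P` is invertible. -/
noncomputable def congEquiv (P P' : Matrix (Fin n) (Fin n) ℂ)
    (hPP' : P * P' = 1) (hP'P : P' * P = 1) : symMat n ℂ ≃ₗ[ℂ] symMat n ℂ :=
  LinearEquiv.ofLinear (congLin P) (congLin P')
    (by
      apply LinearMap.ext; intro W; apply Subtype.ext
      show ((congLin P (congLin P' W)) : Matrix (Fin n) (Fin n) ℂ) = (W : Matrix (Fin n) (Fin n) ℂ)
      rw [congLin_coe, congLin_coe]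
      have : Pᵀ * P'ᵀ = 1 := by rw [← Matrix.transpose_mul, hP'P, Matrix.transpose_one]
      calc Pᵀ * (P'ᵀ * (W : Matrix (Fin n) (Fin n) ℂ) * P') * P
          = (Pᵀ * P'ᵀ) * (W : Matrix (Fin n) (Fin n) ℂ) * (P' * P) := by
            simp only [Matrix.mul_assoc]
        _ = (W : Matrix (Fin n) (Fin n) ℂ) := by rw [this, hP'P, Matrix.one_mul, Matrix.mul_one])
    (by
      apply LinearMap.ext; intro W; apply Subtype.ext
      show ((congLin P' (congLin P W)) : Matrix (Fin n) (Fin n) ℂ) = (W : Matrix (Fin n) (Fin n) ℂ)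
      rw [congLin_coe, congLin_coe]
      have : P'ᵀ * Pᵀ = 1 := by rw [← Matrix.transpose_mul, hPP', Matrix.transpose_one]
      calc P'ᵀ * (Pᵀ * (W : Matrix (Fin n) (Fin n) ℂ) * P) * P'
          = (P'ᵀ * Pᵀ) * (W : Matrix (Fin n) (Fin n) ℂ) * (P * P') := by
            simp only [Matrix.mul_assoc]
        _ = (W : Matrix (Fin n) (Fin n) ℂ) := by rw [this, hPP', Matrix.one_mul, Matrix.mul_one])

lemma det_lam_similar (A T P P' : Matrix (Fin n) (Fin n) ℂ)
    (hPP' : P * P' = 1) (hP'P : P' * P = 1) (hA : A = P' * T * P) :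
    LinearMap.det (Lam A) = LinearMap.det (Lam T) := by
  set e := congEquiv P P' hPP' hP'P with he
  have key : Lam A = (e : symMat n ℂ →ₗ[ℂ] symMat n ℂ) ∘ₗ Lam T ∘ₗ
      (e.symm : symMat n ℂ →ₗ[ℂ] symMat n ℂ) := by
    have comm : (Lam A) ∘ₗ (e : symMat n ℂ →ₗ[ℂ] symMat n ℂ)
        = (e : symMat n ℂ →ₗ[ℂ] symMat n ℂ) ∘ₗ Lam T := by
      apply LinearMap.ext; intro W; apply Subtype.ext
      show ((Lam A (congLin P W)) : Matrix (Fin n) (Fin n) ℂ)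
          = ((congLin P (Lam T W)) : Matrix (Fin n) (Fin n) ℂ)
      rw [lam_coe, congLin_coe, congLin_coe, lam_coe]
      have h2 : P * A = T * P := by
        rw [hA]
        calc P * (P' * T * P) = (P * P') * (T * P) := by simp only [Matrix.mul_assoc]
          _ = T * P := by rw [hPP', Matrix.one_mul]
      have h1 : Aᵀ * Pᵀ = Pᵀ * Tᵀ := by
        rw [← Matrix.transpose_mul, ← Matrix.transpose_mul, h2]
      have h3 : (W : Matrix (Fin n) (Fin n) ℂ) * P * A
          = (W : Matrix (Fin n) (Fin n) ℂ) * (T * P) := by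
        rw [Matrix.mul_assoc, h2]
      rw [Matrix.mul_smul, Matrix.smul_mul]
      congr 1
      rw [Matrix.mul_add, Matrix.add_mul]
      congr 1
      · calc Aᵀ * (Pᵀ * (W : Matrix (Fin n) (Fin n) ℂ) * P)
            = (Aᵀ * Pᵀ) * ((W : Matrix (Fin n) (Fin n) ℂ) * P) := by
              simp only [Matrix.mul_assoc]
          _ = Pᵀ * (Tᵀ * (W : Matrix (Fin n) (Fin n) ℂ)) * P := by
              rw [h1]; simp only [Matrix.mul_assoc]
      · calc Pᵀ * (W : Matrix (Fin n) (Fin n) ℂ) * P * A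
            = Pᵀ * ((W : Matrix (Fin n) (Fin n) ℂ) * (P * A)) := by
              simp only [Matrix.mul_assoc]
          _ = Pᵀ * ((W : Matrix (Fin n) (Fin n) ℂ) * T) * P := by
              rw [h2]; simp only [Matrix.mul_assoc]
    calc Lam A = (Lam A ∘ₗ (e : symMat n ℂ →ₗ[ℂ] symMat n ℂ)) ∘ₗ
          (e.symm : symMat n ℂ →ₗ[ℂ] symMat n ℂ) := by
          rw [LinearMap.comp_assoc]
          ext W
          simp [LinearEquiv.coe_coe, LinearEquiv.apply_symm_apply]
      _ = _ := by rw [comm, LinearMap.comp_assoc]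
  rw [key, LinearMap.det_conj]

end DetLam

namespace DetLam

variable {n : ℕ}

/-- Lift an `n × n` matrix to an `(n+1) × (n+1)` matrix with a `1` in the corner. -/
def liftM (Q : Matrix (Fin n) (Fin n) ℂ) : Matrix (Fin (n + 1)) (Fin (n + 1)) ℂ :=
  Matrix.of fun i j =>
    if hi : i = 0 then (if j = 0 then 1 else 0)
    else if hj : j = 0 then 0 else Q (i.pred hi) (j.pred hj)

lemma liftM_zero_zero (Q : Matrix (Fin n) (Fin n) ℂ) : liftM Q 0 0 = 1 := by simp [liftM]

lemma liftM_zero_succ (Q : Matrix (Fin n) (Fin n) ℂ) (j : Fin n) : liftM Q 0 j.succ = 0 := by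
  simp [liftM, Fin.succ_ne_zero]

lemma liftM_succ_zero (Q : Matrix (Fin n) (Fin n) ℂ) (i : Fin n) : liftM Q i.succ 0 = 0 := by
  simp [liftM, Fin.succ_ne_zero]

lemma liftM_succ_succ (Q : Matrix (Fin n) (Fin n) ℂ) (i j : Fin n) :
    liftM Q i.succ j.succ = Q i j := by
  simp [liftM, Fin.succ_ne_zero, Fin.pred_succ]

lemma liftM_mul (Q R : Matrix (Fin n) (Fin n) ℂ) : liftM Q * liftM R = liftM (Q * R) := by
  ext i j
  rw [Matrix.mul_apply, Fin.sum_univ_succ]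
  rcases Fin.eq_zero_or_eq_succ i with rfl | ⟨s, rfl⟩
  · rw [liftM_zero_zero, one_mul,
      Finset.sum_congr rfl (fun k _ => by rw [liftM_zero_succ, zero_mul]),
      Finset.sum_const_zero, add_zero]
    rcases Fin.eq_zero_or_eq_succ j with rfl | ⟨t, rfl⟩
    · rw [liftM_zero_zero, liftM_zero_zero]
    · rw [liftM_zero_succ, liftM_zero_succ]
  · rw [liftM_succ_zero, zero_mul, zero_add]
    rcases Fin.eq_zero_or_eq_succ j with rfl | ⟨t, rfl⟩
    · rw [Finset.sum_congr rfl (fun k _ => by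
        rw [liftM_succ_succ, liftM_succ_zero, mul_zero]),
        Finset.sum_const_zero, liftM_succ_zero]
    · rw [Finset.sum_congr rfl (fun k _ => by rw [liftM_succ_succ, liftM_succ_succ]),
        liftM_succ_succ, Matrix.mul_apply]

lemma liftM_one : liftM (1 : Matrix (Fin n) (Fin n) ℂ) = 1 := by
  ext i j
  rcases Fin.eq_zero_or_eq_succ i with rfl | ⟨s, rfl⟩
  · rcases Fin.eq_zero_or_eq_succ j with rfl | ⟨t, rfl⟩
    · rw [liftM_zero_zero, Matrix.one_apply_eq]
    · rw [liftM_zero_succ, Matrix.one_apply_ne (Ne.symm (Fin.succ_ne_zero t))]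
  · rcases Fin.eq_zero_or_eq_succ j with rfl | ⟨t, rfl⟩
    · rw [liftM_succ_zero, Matrix.one_apply_ne (Fin.succ_ne_zero s)]
    · rw [liftM_succ_succ]
      by_cases h : s = t
      · subst h; rw [Matrix.one_apply_eq, Matrix.one_apply_eq]
      · rw [Matrix.one_apply_ne h, Matrix.one_apply_ne (fun hc => h (Fin.succ_inj.mp hc))]

theorem exists_triangular (n : ℕ) :
    ∀ A : Matrix (Fin n) (Fin n) ℂ, ∃ P P' : Matrix (Fin n) (Fin n) ℂ,
      P * P' = 1 ∧ P' * P = 1 ∧ (P' * A * P).BlockTriangular (id : Fin n → Fin n) := by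
  induction n with
  | zero =>
    intro A
    exact ⟨1, 1, by simp, by simp, fun i _ _ => i.elim0⟩
  | succ m ih =>
    intro A
    -- find an eigenvector
    obtain ⟨μ, hμ⟩ := Module.End.exists_eigenvalue (Matrix.toLin' A)
    obtain ⟨v, hv⟩ := hμ.exists_hasEigenvector
    have hAv : A *ᵥ v = μ • v := by
      have := hv.apply_eq_smul
      rwa [Matrix.toLin'_apply] at this
    -- build a basis whose 0-th vector is v
    have hli := LinearIndepOn.singleton (R := ℂ) (v := id) hv.2
    let b := Module.Basis.extend hli
    haveI := FiniteDimensional.fintypeBasisIndex b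
    let e0 := b.indexEquiv (Pi.basisFun ℂ (Fin (m + 1)))
    have hvmem : v ∈ hli.extend (Set.subset_univ _) := hli.subset_extend _ rfl
    let x0 : ↥(hli.extend (Set.subset_univ _)) := ⟨v, hvmem⟩
    let e := e0.trans (Equiv.swap (e0 x0) 0)
    let b' := b.reindex e
    have hb'0 : b' 0 = v := by
      rw [Module.Basis.reindex_apply]
      have he : e.symm 0 = x0 := by
        show e0.symm ((Equiv.swap (e0 x0) 0).symm 0) = x0
        rw [Equiv.symm_swap, Equiv.swap_apply_right, Equiv.symm_apply_apply]
      rw [he]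
      exact congrFun (Module.Basis.coe_extend hli) x0
    set P := (Pi.basisFun ℂ (Fin (m + 1))).toMatrix ⇑b' with hPdef
    haveI : Invertible P := (Pi.basisFun ℂ (Fin (m + 1))).invertibleToMatrix b'
    set P' := ⅟P with hP'def
    have hPP' : P * P' = 1 := mul_invOf_self P
    have hP'P : P' * P = 1 := invOf_mul_self P
    have hPv : ∀ l, P l 0 = v l := by
      intro l
      rw [hPdef, Module.Basis.toMatrix_apply, hb'0, Pi.basisFun_repr]
    set M := P' * A * P with hMdef
    have hM0 : ∀ i : Fin (m + 1), i ≠ 0 → M i 0 = 0 := by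
      have hAPc : ∀ k, (A * P) k 0 = μ * P k 0 := by
        intro k
        rw [Matrix.mul_apply, Finset.sum_congr rfl (fun l _ => by rw [hPv l])]
        have h2 := congrFun hAv k
        simp only [Matrix.mulVec, dotProduct, Pi.smul_apply, smul_eq_mul] at h2
        rw [h2, hPv]
      intro i hi
      rw [hMdef, Matrix.mul_assoc, Matrix.mul_apply,
        Finset.sum_congr rfl (fun k _ => by rw [hAPc k]),
        Finset.sum_congr rfl (fun k _ => show P' i k * (μ * P k 0) = μ * (P' i k * P k 0) by ring),
        ← Finset.mul_sum, ← Matrix.mul_apply, hP'P, Matrix.one_apply_ne hi, mul_zero]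
    -- triangularize the lower-right block
    set B := Matrix.of (fun i j : Fin m => M i.succ j.succ) with hBdef
    obtain ⟨Q, Q', hQ1, hQ2, hQt⟩ := ih B
    have hRR' : liftM Q * liftM Q' = 1 := by rw [liftM_mul, hQ1, liftM_one]
    have hR'R : liftM Q' * liftM Q = 1 := by rw [liftM_mul, hQ2, liftM_one]
    refine ⟨P * liftM Q, liftM Q' * P', ?_, ?_, ?_⟩
    · calc P * liftM Q * (liftM Q' * P')
          _ = P * (liftM Q * liftM Q') * P' := by simp only [Matrix.mul_assoc]
          _ = P * P' := by rw [hRR', Matrix.mul_one]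
          _ = 1 := hPP'
    · calc liftM Q' * P' * (P * liftM Q)
          _ = liftM Q' * (P' * P) * liftM Q := by simp only [Matrix.mul_assoc]
          _ = liftM Q' * liftM Q := by rw [hP'P, Matrix.mul_one]
          _ = 1 := hR'R
    · have hEq : liftM Q' * P' * A * (P * liftM Q) = liftM Q' * (M * liftM Q) := by
        rw [hMdef]; simp only [Matrix.mul_assoc]
      rw [hEq]
      -- entries of M * liftM Q
      have hMR : ∀ (k : Fin m) (j : Fin (m + 1)), (M * liftM Q) k.succ j =
          if hj : j = 0 then 0 else (B * Q) k (j.pred hj) := by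
        intro k j
        rcases Fin.eq_zero_or_eq_succ j with rfl | ⟨t, rfl⟩
        · rw [dif_pos rfl, Matrix.mul_apply, Fin.sum_univ_succ, liftM_zero_zero, mul_one,
            hM0 _ (Fin.succ_ne_zero k),
            Finset.sum_congr rfl (fun l _ => by rw [liftM_succ_zero, mul_zero]),
            Finset.sum_const_zero, add_zero]
        · rw [dif_neg (Fin.succ_ne_zero t), Matrix.mul_apply, Fin.sum_univ_succ,
            liftM_zero_succ, mul_zero, zero_add,
            Finset.sum_congr rfl (fun l _ => by rw [liftM_succ_succ]),
            Fin.pred_succ, Matrix.mul_apply]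
          rfl
      intro i j hij
      have hi0 : i ≠ 0 := Fin.pos_iff_ne_zero.mp (lt_of_le_of_lt (Fin.zero_le _) hij)
      obtain ⟨s, rfl⟩ := Fin.eq_succ_of_ne_zero hi0
      rw [Matrix.mul_apply, Fin.sum_univ_succ, liftM_succ_zero, zero_mul, zero_add,
        Finset.sum_congr rfl (fun k _ => by rw [liftM_succ_succ, hMR])]
      rcases Fin.eq_zero_or_eq_succ j with rfl | ⟨t, rfl⟩
      · simp
      · rw [Finset.sum_congr rfl (fun k _ => by rw [dif_neg (Fin.succ_ne_zero t), Fin.pred_succ])]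
        have htlt : t < s := by
          have := hij
          simpa [Fin.succ_lt_succ_iff] using this
        calc ∑ k, Q' s k * (B * Q) k t = (Q' * (B * Q)) s t := by rw [Matrix.mul_apply]
          _ = (Q' * B * Q) s t := by rw [Matrix.mul_assoc]
          _ = 0 := hQt (show id t < id s from htlt)

end DetLam

namespace DetLam

variable {n : ℕ}

lemma charpoly_similar (A P P' : Matrix (Fin n) (Fin n) ℂ)
    (hPP' : P * P' = 1) (hP'P : P' * P = 1) :
    (P' * A * P).charpoly = A.charpoly := by
  have hcomm : Commute (Matrix.scalar (Fin n) (X : ℂ[X]))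
      ((C : ℂ →+* ℂ[X]).mapMatrix P) :=
    Matrix.scalar_commute _ (fun r' => Commute.all _ _) _
  have hone : (C : ℂ →+* ℂ[X]).mapMatrix P' * (C : ℂ →+* ℂ[X]).mapMatrix P = 1 := by
    rw [← _root_.map_mul, hP'P, _root_.map_one]
  have hkey : Matrix.charmatrix (P' * A * P) =
      (C : ℂ →+* ℂ[X]).mapMatrix P' * Matrix.charmatrix A * (C : ℂ →+* ℂ[X]).mapMatrix P := by
    show Matrix.scalar (Fin n) (X : ℂ[X]) - (C : ℂ →+* ℂ[X]).mapMatrix (P' * A * P) = _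
    rw [show Matrix.charmatrix A
        = Matrix.scalar (Fin n) (X : ℂ[X]) - (C : ℂ →+* ℂ[X]).mapMatrix A from rfl]
    rw [Matrix.mul_sub, Matrix.sub_mul]
    congr 1
    · calc Matrix.scalar (Fin n) (X : ℂ[X])
          _ = ((C : ℂ →+* ℂ[X]).mapMatrix P' * (C : ℂ →+* ℂ[X]).mapMatrix P) *
              Matrix.scalar (Fin n) (X : ℂ[X]) := by rw [hone, Matrix.one_mul]
          _ = (C : ℂ →+* ℂ[X]).mapMatrix P' *
              ((C : ℂ →+* ℂ[X]).mapMatrix P * Matrix.scalar (Fin n) (X : ℂ[X])) := by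
              rw [Matrix.mul_assoc]
          _ = (C : ℂ →+* ℂ[X]).mapMatrix P' *
              (Matrix.scalar (Fin n) (X : ℂ[X]) * (C : ℂ →+* ℂ[X]).mapMatrix P) := by
              rw [hcomm.eq]
          _ = (C : ℂ →+* ℂ[X]).mapMatrix P' * Matrix.scalar (Fin n) (X : ℂ[X]) *
              (C : ℂ →+* ℂ[X]).mapMatrix P := by rw [Matrix.mul_assoc]
    · rw [_root_.map_mul, _root_.map_mul]
  rw [Matrix.charpoly, Matrix.charpoly, hkey, Matrix.det_mul, Matrix.det_mul]
  have h1 : ((C : ℂ →+* ℂ[X]).mapMatrix P').det * ((C : ℂ →+* ℂ[X]).mapMatrix P).det = 1 := by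
    rw [← Matrix.det_mul, hone, Matrix.det_one]
  calc ((C : ℂ →+* ℂ[X]).mapMatrix P').det * (Matrix.charmatrix A).det *
        ((C : ℂ →+* ℂ[X]).mapMatrix P).det
      _ = (Matrix.charmatrix A).det * (((C : ℂ →+* ℂ[X]).mapMatrix P').det *
          ((C : ℂ →+* ℂ[X]).mapMatrix P).det) := by ring
      _ = (Matrix.charmatrix A).det := by rw [h1, mul_one]

/-- Half-sum as a function on `Sym2 ℂ`. -/
noncomputable def halfSum : Sym2 ℂ → ℂ :=
  Sym2.lift ⟨fun a b => (a + b) / 2, fun a b => by show (a + b) / 2 = (b + a) / 2; rw [add_comm]⟩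

lemma halfSum_mk (a b : ℂ) : halfSum s(a, b) = (a + b) / 2 := rfl

lemma prod_filter_eq_sym2 (f : Fin n → ℂ) :
    (∏ p ∈ Finset.univ.filter (fun p : Fin n × Fin n => p.1 ≤ p.2), (f p.1 + f p.2) / 2)
      = ((((Finset.univ.val : Multiset (Fin n)).map f).sym2).map halfSum).prod := by
  rw [Finset.prod_subtype (p := fun p : Fin n × Fin n => p.1 ≤ p.2)
    (Finset.univ.filter (fun p : Fin n × Fin n => p.1 ≤ p.2))
    (by intro x; simp) (fun p => (f p.1 + f p.2) / 2)]
  rw [show (∏ x : {p : Fin n × Fin n // p.1 ≤ p.2}, (f (x : Fin n × Fin n).1 + f (x : Fin n × Fin n).2) / 2)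
      = ∏ z : Sym2 (Fin n), halfSum (Sym2.map f z) from
    (Fintype.prod_equiv (Sym2.sortEquiv (α := Fin n))
      (fun z => halfSum (Sym2.map f z))
      (fun x => (f (x : Fin n × Fin n).1 + f (x : Fin n × Fin n).2) / 2)
      (fun z => by
        induction z using Sym2.ind with
        | _ a b =>
          show halfSum (Sym2.map f s(a, b)) = _
          rw [Sym2.map_pair_eq, halfSum_mk]
          rcases le_total a b with h | h
          · simp [Sym2.sortEquiv, inf_eq_left.2 h, sup_eq_right.2 h]
          · simp only [Sym2.sortEquiv, Equiv.coe_fn_mk, Sym2.inf_mk, Sym2.sup_mk,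
              inf_eq_right.2 h, sup_eq_left.2 h]
            rw [add_comm])).symm]
  rw [Finset.prod_eq_multiset_prod]
  rw [show (Finset.univ : Finset (Sym2 (Fin n))).val
      = ((Finset.univ : Finset (Fin n)).val).sym2 from
    congrArg Finset.val (Finset.sym2_univ _).symm]
  rw [Multiset.sym2_map, Multiset.map_map]
  rfl

end DetLam

/-- If the characteristic polynomial of `A` factors as `∏ (X - λᵢ)`, then
`det Λ_A = ∏_{i ≤ j} (λᵢ + λⱼ)/2`. -/
theorem det_lam_eq_prod {n : ℕ} (A : Matrix (Fin n) (Fin n) ℂ) (lam : Fin n → ℂ)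
    (hA : A.charpoly = ∏ i, (X - C (lam i))) :
    LinearMap.det (Lam A) =
      ∏ p ∈ Finset.univ.filter (fun p : Fin n × Fin n => p.1 ≤ p.2),
        (lam p.1 + lam p.2) / 2 := by
  classical
  obtain ⟨P, P', hPP', hP'P, hT⟩ := DetLam.exists_triangular n A
  set T := P' * A * P with hTdef
  set d : Fin n → ℂ := fun i => T i i with hd
  -- determinant via the triangular form
  have hdet : LinearMap.det (Lam A) = LinearMap.det (Lam T) := by
    apply DetLam.det_lam_similar A T P' P hP'P hPP'
    rw [hTdef]
    calc A = 1 * A * 1 := by rw [Matrix.one_mul, Matrix.mul_one]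
      _ = (P * P') * A * (P * P') := by rw [hPP']
      _ = P * (P' * A * P) * P' := by simp only [Matrix.mul_assoc]
  have hdet2 : LinearMap.det (Lam T) = ∏ x : DetLam.Idx n, (d x.1.1 + d x.1.2) / 2 :=
    DetLam.det_lam_triangular T hT
  -- eigenvalue multiset equality
  have hchar : T.charpoly = ∏ i, (X - C (d i)) := Matrix.charpoly_of_upperTriangular T hT
  have hcharA : T.charpoly = A.charpoly := DetLam.charpoly_similar A P P' hPP' hP'P
  have hpoly : (Multiset.map (fun a => X - C a)
        ((Finset.univ.val : Multiset (Fin n)).map lam)).prod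
      = (Multiset.map (fun a => X - C a)
        ((Finset.univ.val : Multiset (Fin n)).map d)).prod := by
    rw [Multiset.map_map, Multiset.map_map]
    rw [show (Multiset.map ((fun a => X - C a) ∘ lam) Finset.univ.val).prod
        = ∏ i, (X - C (lam i)) from (Finset.prod_eq_multiset_prod _ _).symm]
    rw [show (Multiset.map ((fun a => X - C a) ∘ d) Finset.univ.val).prod
        = ∏ i, (X - C (d i)) from (Finset.prod_eq_multiset_prod _ _).symm]
    rw [← hA, ← hchar, hcharA]
  have hmult : (Finset.univ.val : Multiset (Fin n)).map lam
      = (Finset.univ.val : Multiset (Fin n)).map d := by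
    have := congrArg Polynomial.roots hpoly
    rwa [Polynomial.roots_multiset_prod_X_sub_C, Polynomial.roots_multiset_prod_X_sub_C] at this
  -- assemble
  rw [hdet, hdet2]
  rw [show (∏ x : DetLam.Idx n, (d x.1.1 + d x.1.2) / 2)
      = ∏ p ∈ Finset.univ.filter (fun p : Fin n × Fin n => p.1 ≤ p.2), (d p.1 + d p.2) / 2 from
    (Finset.prod_subtype (p := fun p : Fin n × Fin n => p.1 ≤ p.2)
      (Finset.univ.filter (fun p : Fin n × Fin n => p.1 ≤ p.2))
      (by intro x; simp) (fun p => (d p.1 + d p.2) / 2)).symm]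
  rw [DetLam.prod_filter_eq_sym2 d, DetLam.prod_filter_eq_sym2 lam, hmult]
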